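/- Let Q(x) = x^2 - p x + q over ℂ with distinct roots (Δ = p^2 - 4q ≠ 0), let F = -1/Q, and define polynomials α_{i,n}(x) by α_{i,n} = 0 for i < 0 or i ≥ n, α_{0,1} = 1, and α_{i,n+1} = (1/(Δ n)) * (Q' * α_{i,n}' + Q' * α_{i-1,n} + 4n * α_{i,n}). Then each α_{i,n} is a scalar multiple of (Q')^i, i.e. there exists a constant c ∈ ℚ(Δ-coefficients) with α_{i,n}(x) = c * (Q'(x))^i. -/

import Mathlib

open Polynomial

theorem alpha_poly_proportional_to_Qderiv_pow (p q : ℂ) (hΔ : p ^ 2 - 4 * q ≠ 0)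
    (Q : ℂ[X]) (hQ : Q = X ^ 2 - C p * X + C q)
    (A : ℤ → ℤ → ℂ[X])
    (h0 : ∀ i n : ℤ, (i < 0 ∨ i ≥ n) → A i n = 0)
    (h1 : A 0 1 = 1)
    (hrec : ∀ i n : ℤ, 1 ≤ n →
      A i (n + 1) = C (1 / ((p ^ 2 - 4 * q) * (n : ℂ))) *
        (derivative Q * derivative (A i n) + derivative Q * A (i - 1) n
          + C (4 * (n : ℂ)) * A i n)) :
    ∀ i n : ℕ, ∃ c : ℂ, A (i : ℤ) (n : ℤ) = C c * (derivative Q) ^ i := by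
  have hQ'' : derivative (derivative Q) = C 2 := by
    rw [hQ]; simp; rw [← C_1, ← C_add]; norm_num
  suffices h : ∀ n i : ℕ, ∃ c : ℂ, A (i : ℤ) (n : ℤ) = C c * (derivative Q) ^ i by
    intro i n; exact h n i
  intro n
  induction n with
  | zero =>
    intro i
    exact ⟨0, by simp [h0 (i : ℤ) 0 (Or.inr (by positivity))]⟩
  | succ m ih =>
    rcases Nat.eq_zero_or_pos m with hm | hm
    · subst hm
      intro i
      match i with
      | 0 => exact ⟨1, by simpa using h1⟩
      | (j+1) =>
        refine ⟨0, ?_⟩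
        have h : A ((j : ℤ) + 1) (1 : ℤ) = 0 := h0 _ _ (Or.inr (by omega))
        simp [h]
    · intro i
      have hm' : (1 : ℤ) ≤ (m : ℤ) := by exact_mod_cast hm
      match i with
      | 0 =>
        obtain ⟨c, hc⟩ := ih 0
        have hc0 : A (0 : ℤ) (m : ℤ) = C c := by simpa using hc
        have hrec' := hrec 0 (m : ℤ) hm'
        have hneg : A ((0 : ℤ) - 1) (m : ℤ) = 0 := h0 _ _ (Or.inl (by omega))
        refine ⟨1 / ((p ^ 2 - 4 * q) * ((m : ℤ) : ℂ)) * (4 * ((m : ℤ) : ℂ) * c), ?_⟩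
        have h : A (0 : ℤ) ((m : ℤ) + 1) =
            C (1 / ((p ^ 2 - 4 * q) * ((m : ℤ) : ℂ)) * (4 * ((m : ℤ) : ℂ) * c)) *
              (derivative Q) ^ (0 : ℕ) := by
          rw [hrec', hneg, hc0]
          simp only [derivative_C, mul_zero, add_zero, zero_add, pow_zero, mul_one]
          simp only [C_mul]
        simpa [Nat.cast_add] using h
      | (j+1) =>
        obtain ⟨c, hc⟩ := ih (j + 1)
        obtain ⟨c', hc'⟩ := ih j
        have hrec' := hrec ((j : ℤ) + 1) (m : ℤ) hm'
        have hj : ((j + 1 : ℕ) : ℤ) = (j : ℤ) + 1 := by push_cast; ring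
        rw [hj] at hc
        refine ⟨1 / ((p ^ 2 - 4 * q) * ((m : ℤ) : ℂ)) *
          (2 * ((j : ℂ) + 1) * c + c' + 4 * ((m : ℤ) : ℂ) * c), ?_⟩
        have hder : derivative (A ((j : ℤ) + 1) (m : ℤ)) =
            C (2 * ((j : ℂ) + 1) * c) * (derivative Q) ^ j := by
          rw [hc, derivative_C_mul, derivative_pow, hQ'']
          simp only [Nat.add_sub_cancel, Nat.cast_add, Nat.cast_one, C_add, C_mul, C_1]
          ring
        have hsub : ((j : ℤ) + 1) - 1 = (j : ℤ) := by ring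
        have h : A ((j : ℤ) + 1) ((m : ℤ) + 1) =
            C (1 / ((p ^ 2 - 4 * q) * ((m : ℤ) : ℂ)) *
              (2 * ((j : ℂ) + 1) * c + c' + 4 * ((m : ℤ) : ℂ) * c)) *
              (derivative Q) ^ (j + 1) := by
          rw [hrec', hder, hsub, hc', hc]
          simp only [C_add, C_mul, C_1]
          ring
        rw [show ((m + 1 : ℕ) : ℤ) = (m : ℤ) + 1 by push_cast; ring, hj]
        exact h
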